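/- Let f be C¹ with |f'| ≤ L_f on [m,M], ϑ C² with ϑ'' > 0, v = ϑ' with inverse u(·), L_u as defined above, and h_ec(u⁻,u⁺) = (ψ(u⁺)−ψ(u⁻))/(v(u⁺)−v(u⁻)) with ψ(u) = v(u)f(u) − g(u), g' = v f'. Then for u ≠ u⁺ in [m,M], |∂₁ h_ec(u,u⁺)| ≤ L_f · L_u. -/

import Mathlib

/-- Bound |∂₁h_ec(u,u⁺)| ≤ L_f·L_u on the partial derivative of the EC flux. -/
theorem stmt14 (f ϑ : ℝ → ℝ) (m M Lf Lu : ℝ)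
    (hf : ContDiff ℝ 1 f) (hf' : ∀ w ∈ Set.Icc m M, |deriv f w| ≤ Lf)
    (hϑ : ContDiff ℝ 2 ϑ) (hconv : ∀ x, 0 < deriv (deriv ϑ) x)
    (g ψ : ℝ → ℝ)
    (hg : ∀ u, g u = ∫ w in m..u, deriv ϑ w * deriv f w)
    (hψ : ∀ u, ψ u = deriv ϑ u * f u - g u)
    (hLu : ∀ a ∈ Set.Icc m M, ∀ b ∈ Set.Icc m M, a ≠ b →
      deriv (deriv ϑ) b * (b - a) / (deriv ϑ b - deriv ϑ a) ≤ Lu)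
    (u up : ℝ) (hu : u ∈ Set.Icc m M) (hup : up ∈ Set.Icc m M) (hne : u ≠ up) :
    |deriv (deriv ϑ) u * (ψ up - ψ u - (deriv ϑ up - deriv ϑ u) * f u) /
        (deriv ϑ up - deriv ϑ u) ^ 2| ≤ Lf * Lu := by
  set v := deriv ϑ with hvdef
  set v' := deriv v with hv'def
  -- regularity
  have hvC : ContDiff ℝ 1 v := (contDiff_succ_iff_deriv.mp (show ContDiff ℝ (1+1) ϑ from hϑ)).2.2
  have hvd : Differentiable ℝ v := hvC.differentiable one_ne_zero
  have hv'c : Continuous v' := (contDiff_succ_iff_deriv.mp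
    (show ContDiff ℝ (0+1) v from by exact_mod_cast hvC)).2.2.continuous
  have hfd : Differentiable ℝ f := hf.differentiable one_ne_zero
  have hf'c : Continuous (deriv f) := (contDiff_succ_iff_deriv.mp
    (show ContDiff ℝ (0+1) f from by exact_mod_cast hf)).2.2.continuous
  have hvmono : StrictMono v := strictMono_of_deriv_pos hconv
  -- interval integrability
  have hI1 : ∀ a b : ℝ, IntervalIntegrable (fun w => v w * deriv f w) MeasureTheory.volume a b :=
    fun a b => (hvC.continuous.mul hf'c).intervalIntegrable a b
  have hI2 : ∀ a b : ℝ, IntervalIntegrable (fun w => v' w * f w + v w * deriv f w)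
      MeasureTheory.volume a b :=
    fun a b => ((hv'c.mul hf.continuous).add (hvC.continuous.mul hf'c)).intervalIntegrable a b
  have hI3 : ∀ a b : ℝ, IntervalIntegrable v' MeasureTheory.volume a b :=
    fun a b => hv'c.intervalIntegrable a b
  have hI4 : ∀ a b : ℝ, IntervalIntegrable (fun w => v' w * (f w - f u))
      MeasureTheory.volume a b :=
    fun a b => (hv'c.mul (hf.continuous.sub continuous_const)).intervalIntegrable a b
  -- FTC pieces
  have hg_sub : g up - g u = ∫ w in u..up, v w * deriv f w := by
    rw [hg, hg]
    exact intervalIntegral.integral_interval_sub_left (hI1 m up) (hI1 m u)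
  have hF_sub : v up * f up - v u * f u
      = ∫ w in u..up, (v' w * f w + v w * deriv f w) := by
    refine (intervalIntegral.integral_eq_sub_of_hasDerivAt (f := fun w => v w * f w)
      (fun x _ => (hvd x).hasDerivAt.mul (hfd x).hasDerivAt) (hI2 u up)).symm
  have hv_sub : v up - v u = ∫ w in u..up, v' w := by
    refine (intervalIntegral.integral_eq_sub_of_hasDerivAt (fun x _ => (hvd x).hasDerivAt)
      (hI3 u up)).symm
  -- numerator as an integral
  have hN : ψ up - ψ u - (v up - v u) * f u = ∫ w in u..up, v' w * (f w - f u) := by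
    have e1 : (∫ w in u..up, v' w * (f w - f u))
        = (∫ w in u..up, (v' w * f w + v w * deriv f w))
          - (∫ w in u..up, v w * deriv f w) - (∫ w in u..up, v' w) * f u := by
      rw [← intervalIntegral.integral_sub (hI2 u up) (hI1 u up),
        ← intervalIntegral.integral_mul_const,
        ← intervalIntegral.integral_sub (by
            simpa using (hI2 u up).sub (hI1 u up)) (by
            exact ((hv'c.mul continuous_const).intervalIntegrable u up))]
      apply intervalIntegral.integral_congr
      intro w _
      ring
    rw [hψ, hψ, e1, ← hg_sub, ← hF_sub, ← hv_sub]
    ring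
  -- Lipschitz bound for f on [m, M]
  have hlip : ∀ w ∈ Set.Icc m M, |f w - f u| ≤ Lf * |w - u| := by
    intro w hw
    have := (convex_Icc m M).norm_image_sub_le_of_norm_deriv_le
      (fun x _ => hfd x) (fun x hx => by simpa using hf' x hx) hu hw
    simpa [Real.norm_eq_abs] using this
  have hmM : m ≤ M := le_trans hu.1 hu.2
  have hsub : Set.uIcc u up ⊆ Set.Icc m M := by
    rw [← Set.uIcc_of_le hmM]
    exact Set.uIcc_subset_uIcc (by rwa [Set.uIcc_of_le hmM]) (by rwa [Set.uIcc_of_le hmM])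
  set c := |up - u| with hc
  -- pointwise bound
  have hpt : ∀ w ∈ Set.uIcc u up, |v' w * (f w - f u)| ≤ v' w * (Lf * c) := by
    intro w hw
    have hwu : |w - u| ≤ c := by
      rcases le_total u up with h | h
      · rw [Set.uIcc_of_le h] at hw
        rw [hc, abs_of_nonneg (by linarith [hw.1] : (0:ℝ) ≤ w - u),
          abs_of_nonneg (by linarith : (0:ℝ) ≤ up - u)]
        linarith [hw.2]
      · rw [Set.uIcc_of_ge h] at hw
        rw [hc, abs_of_nonpos (by linarith [hw.2] : w - u ≤ 0),
          abs_of_nonpos (by linarith : up - u ≤ 0)]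
        linarith [hw.1]
    have hLf0 : 0 ≤ Lf := le_trans (abs_nonneg _) (hf' u hu)
    calc |v' w * (f w - f u)| = v' w * |f w - f u| := by
          rw [abs_mul, abs_of_pos (hconv w)]
      _ ≤ v' w * (Lf * |w - u|) := by
          exact mul_le_mul_of_nonneg_left (hlip w (hsub hw)) (le_of_lt (hconv w))
      _ ≤ v' w * (Lf * c) := by
          apply mul_le_mul_of_nonneg_left _ (le_of_lt (hconv w))
          exact mul_le_mul_of_nonneg_left hwu hLf0
  have hLf0 : 0 ≤ Lf := le_trans (abs_nonneg _) (hf' u hu)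
  -- bound on the numerator integral
  have hNb : |ψ up - ψ u - (v up - v u) * f u| ≤ |v up - v u| * (Lf * c) := by
    rw [hN]
    rcases lt_or_gt_of_ne hne with h | h
    · have hD : 0 < v up - v u := sub_pos.mpr (hvmono h)
      have h1 : |∫ w in u..up, v' w * (f w - f u)| ≤ ∫ w in u..up, |v' w * (f w - f u)| := by
        simpa only [Real.norm_eq_abs] using
          intervalIntegral.norm_integral_le_integral_norm (μ := MeasureTheory.volume)
            (f := fun w => v' w * (f w - f u)) h.le
      have h2 : (∫ w in u..up, |v' w * (f w - f u)|) ≤ ∫ w in u..up, v' w * (Lf * c) := by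
        apply intervalIntegral.integral_mono_on h.le ((hI4 u up).abs)
          ((hv'c.mul continuous_const).intervalIntegrable u up)
        intro w hw
        exact hpt w (by rwa [Set.uIcc_of_le h.le])
      have h3 : (∫ w in u..up, v' w * (Lf * c)) = (v up - v u) * (Lf * c) := by
        rw [intervalIntegral.integral_mul_const, ← hv_sub]
      rw [abs_of_pos hD]
      linarith
    · have hD : 0 < v u - v up := sub_pos.mpr (hvmono h)
      rw [intervalIntegral.integral_symm, abs_neg]
      have h1 : |∫ w in up..u, v' w * (f w - f u)| ≤ ∫ w in up..u, |v' w * (f w - f u)| := by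
        simpa only [Real.norm_eq_abs] using
          intervalIntegral.norm_integral_le_integral_norm (μ := MeasureTheory.volume)
            (f := fun w => v' w * (f w - f u)) h.le
      have h2 : (∫ w in up..u, |v' w * (f w - f u)|) ≤ ∫ w in up..u, v' w * (Lf * c) := by
        apply intervalIntegral.integral_mono_on h.le ((hI4 up u).abs)
          ((hv'c.mul continuous_const).intervalIntegrable up u)
        intro w hw
        exact hpt w (by rw [Set.uIcc_comm]; rwa [Set.uIcc_of_le h.le])
      have h3 : (∫ w in up..u, v' w * (Lf * c)) = (v u - v up) * (Lf * c) := by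
        rw [intervalIntegral.integral_mul_const]
        have : v u - v up = ∫ w in up..u, v' w := by
          refine (intervalIntegral.integral_eq_sub_of_hasDerivAt (fun x _ => (hvd x).hasDerivAt)
            (hI3 up u)).symm
        rw [← this]
      rw [abs_sub_comm, abs_of_pos hD]
      linarith
  -- sign and ratio facts
  have hvu' : 0 < v' u := hconv u
  have hDne : v up - v u ≠ 0 := sub_ne_zero.mpr fun hh => hne (hvmono.injective hh.symm)
  have hDabs : 0 < |v up - v u| := abs_pos.mpr hDne
  have hratio : v' u * c / |v up - v u| ≤ Lu := by
    have heq : v' u * c / |v up - v u| = v' u * (u - up) / (v u - v up) := by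
      rcases lt_or_gt_of_ne hne with h | h
      · have hD : 0 < v up - v u := sub_pos.mpr (hvmono h)
        rw [hc, abs_of_pos (by linarith : (0:ℝ) < up - u), abs_of_pos hD]
        have hD' : v u - v up ≠ 0 := by intro hh; rw [sub_eq_zero] at hh; linarith
        field_simp [hD.ne', hD']
        ring
      · have hD : 0 < v u - v up := sub_pos.mpr (hvmono h)
        rw [hc, abs_of_neg (by linarith : up - u < 0), abs_of_neg (by linarith : v up - v u < 0)]
        have hD' : v u - v up ≠ 0 := ne_of_gt hD
        field_simp [hD']
        ring
    rw [heq]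
    exact hLu up hup u hu (Ne.symm hne)
  -- final computation
  have hD2 : (0:ℝ) < (v up - v u) ^ 2 := by positivity
  calc |v' u * (ψ up - ψ u - (v up - v u) * f u) / (v up - v u) ^ 2|
      = v' u * |ψ up - ψ u - (v up - v u) * f u| / (v up - v u) ^ 2 := by
        rw [abs_div, abs_mul, abs_of_pos hvu', abs_of_pos hD2]
    _ ≤ v' u * (|v up - v u| * (Lf * c)) / (v up - v u) ^ 2 := by
        gcongr
    _ = Lf * (v' u * c / |v up - v u|) := by
        rw [show (v up - v u) ^ 2 = |v up - v u| * |v up - v u| by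
          rw [← abs_mul, sq, abs_of_nonneg (mul_self_nonneg _)]]
        field_simp
    _ ≤ Lf * Lu := mul_le_mul_of_nonneg_left hratio hLf0
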